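/- The binary code of length 16 generated by [I₈ | A₂], where A₂ is the given 8×8 matrix, is a self-dual Type I (singly-even, i.e., not doubly-even) code with minimum distance 4 and weight distribution 1 + 12z⁴ + 64z⁶ + 102z⁸ + 64z¹⁰ + 12z¹² + z¹⁶. -/

import Mathlib

set_option maxRecDepth 100000
set_option maxHeartbeats 1000000

/-- The dual (with respect to the standard inner product) of a set of
vectors in `F₂ⁿ`. -/
def dualSet {n : ℕ} (C : Set (Fin n → ZMod 2)) : Set (Fin n → ZMod 2) :=
  {y | ∀ x ∈ C, ∑ i, x i * y i = 0}

/-- The matrix `A₂` obtained from the face-vertex incidence matrix of the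
graph `G₂`. -/
def A2 : Fin 8 → Fin 8 → ZMod 2 :=
  ![![1, 0, 0, 1, 1, 1, 1, 0],
    ![0, 1, 0, 1, 1, 1, 1, 0],
    ![0, 0, 1, 1, 1, 1, 1, 0],
    ![0, 0, 0, 1, 0, 0, 1, 1],
    ![0, 0, 0, 0, 1, 0, 1, 1],
    ![0, 0, 0, 0, 0, 1, 1, 1],
    ![1, 1, 1, 1, 1, 1, 0, 1],
    ![1, 1, 1, 0, 0, 0, 1, 1]]

/-- The rows of the matrix `[I₈ | A₂]`. -/
def G2rows : Fin 8 → Fin 16 → ZMod 2 :=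
  fun i => Fin.append (fun j : Fin 8 => if i = j then 1 else 0) (A2 i)

/-- The binary code `D` of length `16` generated by `[I₈ | A₂]`. -/
def D2 : Submodule (ZMod 2) (Fin 16 → ZMod 2) :=
  Submodule.span (ZMod 2) (Set.range G2rows)

/-- Explicit parametrization of the codewords by the message `c`. -/
def gD2 (c : Fin 8 → ZMod 2) : Fin 16 → ZMod 2 :=
  Fin.append c (fun j => ∑ i, c i * A2 i j)

lemma sum_rows_eq_gD2 (c : Fin 8 → ZMod 2) : ∑ i, c i • G2rows i = gD2 c := by
  funext k
  rw [Finset.sum_apply]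
  have h : ∀ k : Fin 16, (∃ j : Fin 8, k = Fin.castAdd 8 j) ∨
      (∃ j : Fin 8, k = Fin.natAdd 8 j) := by decide
  rcases h k with ⟨j, rfl⟩ | ⟨j, rfl⟩
  · simp only [Pi.smul_apply, smul_eq_mul, G2rows, gD2, Fin.append_left, mul_ite, mul_one,
      mul_zero, Finset.sum_ite_eq', Finset.mem_univ, if_true]
  · simp only [Pi.smul_apply, smul_eq_mul, G2rows, gD2, Fin.append_right]

lemma mem_D2_iff (x : Fin 16 → ZMod 2) : x ∈ D2 ↔ ∃ c, gD2 c = x := by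
  rw [D2, Submodule.mem_span_range_iff_exists_fun]
  simp_rw [sum_rows_eq_gD2]

lemma gD2_apply (c : Fin 8 → ZMod 2) (k : Fin 16) : gD2 c k = ∑ t, c t * G2rows t k := by
  rw [← sum_rows_eq_gD2]; simp [Finset.sum_apply]

lemma proj_gD2 (c : Fin 8 → ZMod 2) : (fun i => gD2 c (Fin.castAdd 8 i)) = c :=
  funext fun i => Fin.append_left _ _ i

lemma rows_orth : ∀ i j : Fin 8, ∑ k, G2rows i k * G2rows j k = 0 := by decide

lemma inner_gD2_gD2 (a b : Fin 8 → ZMod 2) : ∑ k, gD2 a k * gD2 b k = 0 := by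
  have h : ∀ k, gD2 a k * gD2 b k = ∑ t, ∑ s, a t * b s * (G2rows t k * G2rows s k) := by
    intro k
    rw [gD2_apply, gD2_apply, Finset.sum_mul_sum]
    exact Finset.sum_congr rfl fun t _ => Finset.sum_congr rfl fun s _ => by ring
  simp only [h]
  rw [Finset.sum_comm]
  refine Finset.sum_eq_zero fun t _ => ?_
  rw [Finset.sum_comm]
  refine Finset.sum_eq_zero fun s _ => ?_
  rw [← Finset.mul_sum, rows_orth, mul_zero]

lemma inner_row_gD2 (i : Fin 8) (c : Fin 8 → ZMod 2) : ∑ k, G2rows i k * gD2 c k = 0 := by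
  have hr : G2rows i = gD2 (fun t => if t = i then 1 else 0) := by
    rw [← sum_rows_eq_gD2]
    simp [ite_smul, Finset.sum_ite_eq']
  rw [hr]; exact inner_gD2_gD2 _ _

def e88 : Fin 8 ⊕ Fin 8 → Fin 16 := Sum.elim (Fin.castAdd 8) (Fin.natAdd 8)

lemma e88_bij : Function.Bijective e88 := by decide

lemma sum_split (F : Fin 16 → ZMod 2) :
    ∑ k, F k = ∑ j : Fin 8, F (Fin.castAdd 8 j) + ∑ j : Fin 8, F (Fin.natAdd 8 j) := by
  rw [← Fintype.sum_bijective e88 e88_bij (fun p => F (e88 p)) F (fun _ => rfl)]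
  rw [Fintype.sum_sum_type]
  rfl

lemma hsplit (z : Fin 16 → ZMod 2) (i : Fin 8) :
    ∑ k, G2rows i k * z k = z (Fin.castAdd 8 i) + ∑ j, A2 i j * z (Fin.natAdd 8 j) := by
  rw [sum_split]
  congr 1
  · simp [G2rows, Fin.append_left, ite_mul, Finset.sum_ite_eq]

lemma A2ker : ∀ w : Fin 8 → ZMod 2, (∀ i, ∑ j, A2 i j * w j = 0) → w = 0 := by decide

lemma D2_eq_dual : (D2 : Set (Fin 16 → ZMod 2)) = dualSet (D2 : Set (Fin 16 → ZMod 2)) := by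
  apply Set.Subset.antisymm
  · intro y hy x hx
    obtain ⟨a, rfl⟩ := (mem_D2_iff x).1 hx
    obtain ⟨b, rfl⟩ := (mem_D2_iff y).1 hy
    exact inner_gD2_gD2 a b
  · intro y hy
    set c : Fin 8 → ZMod 2 := fun i => y (Fin.castAdd 8 i) with hc
    have hrow : ∀ i, ∑ k, G2rows i k * y k = 0 := fun i =>
      hy (G2rows i) (Submodule.subset_span ⟨i, rfl⟩)
    have hw : (fun j : Fin 8 => y (Fin.natAdd 8 j) - gD2 c (Fin.natAdd 8 j)) = 0 := by
      apply A2ker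
      intro i
      have h1 := hrow i
      rw [hsplit] at h1
      have h2 := inner_row_gD2 i c
      rw [hsplit] at h2
      have h2' : gD2 c (Fin.castAdd 8 i) = c i := Fin.append_left _ _ i
      rw [h2'] at h2
      have h3 : y (Fin.castAdd 8 i) = c i := rfl
      rw [h3] at h1
      simp only [mul_sub, Finset.sum_sub_distrib]
      linear_combination h1 - h2
    have hy_eq : y = gD2 c := by
      funext k
      have h : ∀ k : Fin 16, (∃ j : Fin 8, k = Fin.castAdd 8 j) ∨
          (∃ j : Fin 8, k = Fin.natAdd 8 j) := by decide
      rcases h k with ⟨j, rfl⟩ | ⟨j, rfl⟩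
      · simp only [gD2, Fin.append_left]; rfl
      · have := congrFun hw j
        simpa [sub_eq_zero] using this
    rw [hy_eq]
    exact (mem_D2_iff _).2 ⟨c, rfl⟩

lemma card_eq (P : (Fin 16 → ZMod 2) → Prop) :
    Nat.card {x : Fin 16 → ZMod 2 // x ∈ D2 ∧ P x}
      = Nat.card {c : Fin 8 → ZMod 2 // P (gD2 c)} := by
  refine Nat.card_congr (Equiv.symm ?_)
  refine ⟨fun c => ⟨gD2 c.1, (mem_D2_iff _).2 ⟨c.1, rfl⟩, c.2⟩,
    fun x => ⟨fun i => x.1 (Fin.castAdd 8 i), ?_⟩, fun c => ?_, fun x => ?_⟩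
  · obtain ⟨v, hv, hP⟩ := x
    obtain ⟨c, rfl⟩ := (mem_D2_iff v).1 hv
    simpa [proj_gD2] using hP
  · exact Subtype.ext (proj_gD2 c.1)
  · obtain ⟨v, hv, hP⟩ := x
    obtain ⟨c, rfl⟩ := (mem_D2_iff v).1 hv
    exact Subtype.ext (by simp [proj_gD2])

lemma card_D2 : Nat.card D2 = 256 := by
  have e : (Fin 8 → ZMod 2) ≃ D2 := by
    refine ⟨fun c => ⟨gD2 c, (mem_D2_iff _).2 ⟨c, rfl⟩⟩,
      fun x => fun i => x.1 (Fin.castAdd 8 i), fun c => proj_gD2 c, fun x => ?_⟩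
    obtain ⟨v, hv⟩ := x
    obtain ⟨c, rfl⟩ := (mem_D2_iff v).1 hv
    exact Subtype.ext (by simp [proj_gD2])
  rw [← Nat.card_congr e, Nat.card_eq_fintype_card]
  decide

lemma min_wt : ∀ c : Fin 8 → ZMod 2, gD2 c ≠ 0 → 4 ≤ hammingNorm (gD2 c) := by decide

lemma wt4_exists : ∃ c : Fin 8 → ZMod 2, gD2 c ≠ 0 ∧ hammingNorm (gD2 c) = 4 := by decide

lemma wt_card0 : Fintype.card {c : Fin 8 → ZMod 2 // hammingNorm (gD2 c) = 0} = 1 := by decide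
lemma wt_card4 : Fintype.card {c : Fin 8 → ZMod 2 // hammingNorm (gD2 c) = 4} = 12 := by decide
lemma wt_card6 : Fintype.card {c : Fin 8 → ZMod 2 // hammingNorm (gD2 c) = 6} = 64 := by decide
lemma wt_card8 : Fintype.card {c : Fin 8 → ZMod 2 // hammingNorm (gD2 c) = 8} = 102 := by decide
lemma wt_card10 : Fintype.card {c : Fin 8 → ZMod 2 // hammingNorm (gD2 c) = 10} = 64 := by decide
lemma wt_card12 : Fintype.card {c : Fin 8 → ZMod 2 // hammingNorm (gD2 c) = 12} = 12 := by decide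
lemma wt_card16 : Fintype.card {c : Fin 8 → ZMod 2 // hammingNorm (gD2 c) = 16} = 1 := by decide

lemma row0_mem : G2rows 0 ∈ D2 := Submodule.subset_span ⟨0, rfl⟩

lemma row0_wt : ¬ 4 ∣ hammingNorm (G2rows 0) := by decide

/-- The binary code of length `16` generated by `[I₈ | A₂]` is a
self-dual Type I (singly-even, not doubly-even) code with minimum
distance `4` and weight distribution
`1 + 12z⁴ + 64z⁶ + 102z⁸ + 64z¹⁰ + 12z¹² + z¹⁶`. -/
theorem D2_selfDual_typeI_weightDistribution :
    ((D2 : Set (Fin 16 → ZMod 2)) = dualSet (D2 : Set (Fin 16 → ZMod 2))) ∧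
    (∃ x ∈ D2, ¬ 4 ∣ hammingNorm x) ∧
    (∀ x ∈ D2, x ≠ 0 → 4 ≤ hammingNorm x) ∧
    (∃ x ∈ D2, x ≠ 0 ∧ hammingNorm x = 4) ∧
    Nat.card D2 = 256 ∧
    Nat.card {x : Fin 16 → ZMod 2 // x ∈ D2 ∧ hammingNorm x = 0} = 1 ∧
    Nat.card {x : Fin 16 → ZMod 2 // x ∈ D2 ∧ hammingNorm x = 4} = 12 ∧
    Nat.card {x : Fin 16 → ZMod 2 // x ∈ D2 ∧ hammingNorm x = 6} = 64 ∧
    Nat.card {x : Fin 16 → ZMod 2 // x ∈ D2 ∧ hammingNorm x = 8} = 102 ∧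
    Nat.card {x : Fin 16 → ZMod 2 // x ∈ D2 ∧ hammingNorm x = 10} = 64 ∧
    Nat.card {x : Fin 16 → ZMod 2 // x ∈ D2 ∧ hammingNorm x = 12} = 12 ∧
    Nat.card {x : Fin 16 → ZMod 2 // x ∈ D2 ∧ hammingNorm x = 16} = 1 := by
  refine ⟨D2_eq_dual, ⟨G2rows 0, row0_mem, row0_wt⟩, ?_, ?_, card_D2, ?_, ?_, ?_, ?_, ?_, ?_, ?_⟩
  · intro x hx hx0
    obtain ⟨c, rfl⟩ := (mem_D2_iff x).1 hx
    exact min_wt c hx0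
  · obtain ⟨c, hc0, hc4⟩ := wt4_exists
    exact ⟨gD2 c, (mem_D2_iff _).2 ⟨c, rfl⟩, hc0, hc4⟩
  · rw [card_eq, Nat.card_eq_fintype_card]; exact wt_card0
  · rw [card_eq, Nat.card_eq_fintype_card]; exact wt_card4
  · rw [card_eq, Nat.card_eq_fintype_card]; exact wt_card6
  · rw [card_eq, Nat.card_eq_fintype_card]; exact wt_card8
  · rw [card_eq, Nat.card_eq_fintype_card]; exact wt_card10
  · rw [card_eq, Nat.card_eq_fintype_card]; exact wt_card12
  · rw [card_eq, Nat.card_eq_fintype_card]; exact wt_card16
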